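/- Let n ≥ 1, let 0 < β ≤ 1 and 0 < α₁ ≤ α₂. For each k ∈ ℕ let M_k be an n×n real symmetric matrix with α₁‖v‖² ≤ vᵀ M_k v ≤ α₂‖v‖² for all v ∈ ℝⁿ, and let A_k be an n×n real matrix with A_kᵀ M_{k+1} A_k ⪯ (1−β) M_k. If δ_{k+1} = A_k δ_k for all k, then ‖δ_k‖ ≤ √(α₂/α₁) · (1−β)^{k/2} · ‖δ_0‖ for every k ∈ ℕ; in particular, when β < 1 this equals R·e^{−λk}·‖δ_0‖ with R = √(α₂/α₁) and λ = −(1/2)·log(1−β). -/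

import Mathlib

open Matrix

/-- The Euclidean norm of a vector in `ℝⁿ`. -/
noncomputable def euclNorm {n : ℕ} (v : Fin n → ℝ) : ℝ :=
  Real.sqrt (v ⬝ᵥ v)

/-- For uniformly bounded symmetric metrics `α₁‖v‖² ≤ vᵀ Mₖ v ≤ α₂‖v‖²`
satisfying the discrete contraction condition `Aₖᵀ M_{k+1} Aₖ ⪯ (1-β) Mₖ`
(`P ⪯ Q` meaning `Q - P` is positive semidefinite), solutions of `δ_{k+1} = Aₖ δₖ` satisfy
`‖δₖ‖ ≤ √(α₂/α₁) (1-β)^{k/2} ‖δ₀‖`; moreover when `β < 1` this bound equals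
`R e^{-λ k} ‖δ₀‖` with `R = √(α₂/α₁)` and `λ = -(1/2) log (1-β)`. -/
theorem contraction_incremental_exponential_stability
    (n : ℕ) (hn : 1 ≤ n) (β α₁ α₂ : ℝ)
    (hβ0 : 0 < β) (hβ1 : β ≤ 1) (hα₁ : 0 < α₁) (hα₁₂ : α₁ ≤ α₂)
    (M A : ℕ → Matrix (Fin n) (Fin n) ℝ)
    (hMsym : ∀ k, (M k).IsHermitian)
    (hMlb : ∀ k, ∀ v : Fin n → ℝ, α₁ * (euclNorm v) ^ 2 ≤ v ⬝ᵥ (M k).mulVec v)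
    (hMub : ∀ k, ∀ v : Fin n → ℝ, v ⬝ᵥ (M k).mulVec v ≤ α₂ * (euclNorm v) ^ 2)
    (hcontr : ∀ k, ((1 - β) • M k - (A k)ᵀ * M (k + 1) * A k).PosSemidef)
    (δ : ℕ → Fin n → ℝ)
    (hδ : ∀ k, δ (k + 1) = (A k).mulVec (δ k)) :
    (∀ k : ℕ, euclNorm (δ k) ≤
        Real.sqrt (α₂ / α₁) * (1 - β) ^ ((k : ℝ) / 2) * euclNorm (δ 0)) ∧
    (β < 1 → ∀ k : ℕ,
        Real.sqrt (α₂ / α₁) * (1 - β) ^ ((k : ℝ) / 2) * euclNorm (δ 0) =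
        Real.sqrt (α₂ / α₁) * Real.exp (-(-(1 / 2 : ℝ) * Real.log (1 - β)) * k) *
          euclNorm (δ 0)) := by
  have hβ' : (0:ℝ) ≤ 1 - β := by linarith
  have hVnn : ∀ v : Fin n → ℝ, (0:ℝ) ≤ v ⬝ᵥ v := by
    intro v
    exact Finset.sum_nonneg fun i _ => mul_self_nonneg _
  have hnorm_sq : ∀ v : Fin n → ℝ, (euclNorm v) ^ 2 = v ⬝ᵥ v := by
    intro v
    exact Real.sq_sqrt (hVnn v)
  have hnorm_nonneg : ∀ v : Fin n → ℝ, 0 ≤ euclNorm v := fun v => Real.sqrt_nonneg _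
  -- step inequality
  have step : ∀ k, δ (k+1) ⬝ᵥ (M (k+1)).mulVec (δ (k+1)) ≤
      (1 - β) * (δ k ⬝ᵥ (M k).mulVec (δ k)) := by
    intro k
    have h := (hcontr k).dotProduct_mulVec_nonneg (δ k)
    have hexp : (δ k) ⬝ᵥ (((1 - β) • M k - (A k)ᵀ * M (k + 1) * A k)).mulVec (δ k)
        = (1 - β) * (δ k ⬝ᵥ (M k).mulVec (δ k))
          - ((A k).mulVec (δ k)) ⬝ᵥ (M (k+1)).mulVec ((A k).mulVec (δ k)) := by
      rw [Matrix.sub_mulVec, dotProduct_sub, Matrix.smul_mulVec,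
        dotProduct_smul]
      congr 1
      rw [← Matrix.mulVec_mulVec, ← Matrix.mulVec_mulVec, Matrix.dotProduct_mulVec,
        Matrix.vecMul_transpose]
    rw [hδ k]
    rw [show star (δ k) = δ k from rfl, hexp] at h
    linarith [h]
  -- V k ≤ (1-β)^k V 0
  have Vbound : ∀ k : ℕ, δ k ⬝ᵥ (M k).mulVec (δ k) ≤
      (1 - β) ^ k * (δ 0 ⬝ᵥ (M 0).mulVec (δ 0)) := by
    intro k
    induction k with
    | zero => simp
    | succ k ih =>
      calc δ (k+1) ⬝ᵥ (M (k+1)).mulVec (δ (k+1))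
          ≤ (1 - β) * (δ k ⬝ᵥ (M k).mulVec (δ k)) := step k
        _ ≤ (1 - β) * ((1 - β) ^ k * (δ 0 ⬝ᵥ (M 0).mulVec (δ 0))) := by
            exact mul_le_mul_of_nonneg_left ih hβ'
        _ = (1 - β) ^ (k+1) * (δ 0 ⬝ᵥ (M 0).mulVec (δ 0)) := by ring
  constructor
  · intro k
    have h1 : α₁ * (euclNorm (δ k)) ^ 2 ≤
        (1 - β) ^ k * (α₂ * (euclNorm (δ 0)) ^ 2) := by
      calc α₁ * (euclNorm (δ k)) ^ 2 ≤ δ k ⬝ᵥ (M k).mulVec (δ k) := hMlb k _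
        _ ≤ (1 - β) ^ k * (δ 0 ⬝ᵥ (M 0).mulVec (δ 0)) := Vbound k
        _ ≤ (1 - β) ^ k * (α₂ * (euclNorm (δ 0)) ^ 2) := by
            exact mul_le_mul_of_nonneg_left (hMub 0 _) (pow_nonneg hβ' k)
    have h2 : (euclNorm (δ k)) ^ 2 ≤ (α₂ / α₁) * (1 - β) ^ k * (euclNorm (δ 0)) ^ 2 := by
      rw [div_mul_eq_mul_div, div_mul_eq_mul_div, le_div_iff₀ hα₁]
      nlinarith [h1]
    have h3 := Real.sqrt_le_sqrt h2
    rw [Real.sqrt_sq (hnorm_nonneg _)] at h3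
    calc euclNorm (δ k) ≤ Real.sqrt ((α₂ / α₁) * (1 - β) ^ k * (euclNorm (δ 0)) ^ 2) := h3
      _ = Real.sqrt (α₂ / α₁) * (1 - β) ^ ((k : ℝ) / 2) * euclNorm (δ 0) := by
          rw [Real.sqrt_mul (mul_nonneg (div_nonneg (le_trans hα₁.le hα₁₂) hα₁.le) (pow_nonneg hβ' k)),
            Real.sqrt_mul (div_nonneg (le_trans hα₁.le hα₁₂) hα₁.le),
            Real.sqrt_sq (hnorm_nonneg _)]
          congr 1
          rw [show ((k : ℝ) / 2) = (k : ℝ) * (1/2) by ring,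
            Real.rpow_mul hβ', Real.rpow_natCast, Real.sqrt_eq_rpow, Real.sqrt_eq_rpow]
  · intro hβlt k
    congr 2
    have h0 : (0:ℝ) < 1 - β := by linarith
    rw [show (-(-(1 / 2 : ℝ) * Real.log (1 - β)) * k) = ((k:ℝ)/2) * Real.log (1-β) by ring]
    rw [Real.rpow_def_of_pos h0, mul_comm]
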